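/- For every x ∈ ℝ^n, the vector w(x) = (a ⊙ e^x) ⊘ e^{F(x)} ∈ ℝ^n (with ⊙ the entrywise product and ⊘ the entrywise division) satisfies ((dF/dx)(x))^T w(x) = w(x), i.e. w(x) is an eigenvector of the transpose of the Jacobian of F at x with eigenvalue 1. -/

import Mathlib

open Finset Matrix

/-- The vector `w(x) = (a ⊙ eˣ) ⊘ e^{F x}` is an eigenvector of the transpose of the
Jacobian of the Sinkhorn map `F` with eigenvalue `1`: `(dF/dx)(x)ᵀ w(x) = w(x)`. -/
theorem left_eigenvector_of_sinkhorn_jacobian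
    (n m : ℕ) (hn : 0 < n) (hm : 0 < m)
    (a : Fin n → ℝ) (b : Fin m → ℝ) (K : Matrix (Fin n) (Fin m) ℝ)
    (ha_pos : ∀ i, 0 < a i) (ha_sum : ∑ i, a i = 1)
    (hb_pos : ∀ j, 0 < b j) (hb_sum : ∑ j, b j = 1)
    (hK_pos : ∀ i j, 0 < K i j)
    (F : (Fin n → ℝ) → Fin n → ℝ)
    (hF : ∀ x i, F x i = Real.log (a i) -
      Real.log (∑ j, K i j * (b j / ∑ i', K i' j * Real.exp (x i'))))
    (J : (Fin n → ℝ) → Matrix (Fin n) (Fin n) ℝ)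
    (hJ : ∀ x j i, J x j i = fderiv ℝ F x (Pi.single i 1) j)
    (w : (Fin n → ℝ) → Fin n → ℝ)
    (hw : ∀ x i, w x i = a i * Real.exp (x i) / Real.exp (F x i)) :
    ∀ x : Fin n → ℝ, (J x)ᵀ.mulVec (w x) = w x := by
  intro x
  -- abbreviations (as plain functions, definitionally)
  set S : Fin m → ℝ := fun l => ∑ i', K i' l * Real.exp (x i') with hSdef
  set G : Fin n → ℝ := fun j => ∑ l, K j l * (b l / S l) with hGdef
  have hS_pos : ∀ l, 0 < S l := fun l =>
    Finset.sum_pos (fun i' _ => mul_pos (hK_pos i' l) (Real.exp_pos _)) ⟨⟨0, hn⟩, Finset.mem_univ _⟩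
  have hG_pos : ∀ j, 0 < G j := fun j =>
    Finset.sum_pos (fun l _ => mul_pos (hK_pos j l) (div_pos (hb_pos l) (hS_pos l)))
      ⟨⟨0, hm⟩, Finset.mem_univ _⟩
  -- derivative of S l (as a function of y)
  set L : Fin m → ((Fin n → ℝ) →L[ℝ] ℝ) := fun l =>
    ∑ i', (K i' l * Real.exp (x i')) • (ContinuousLinearMap.proj i') with hLdef
  have hSder : ∀ l, HasFDerivAt (fun y : Fin n → ℝ => ∑ i', K i' l * Real.exp (y i')) (L l) x := by
    intro l
    apply HasFDerivAt.fun_sum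
    intro i' _
    have h1 : HasFDerivAt (fun y : Fin n → ℝ => y i')
        (ContinuousLinearMap.proj i' : (Fin n → ℝ) →L[ℝ] ℝ) x :=
      hasFDerivAt_apply i' x
    have h3 := (h1.exp).const_mul (K i' l)
    rw [smul_smul] at h3
    exact h3
  -- derivative of G j (as a function of y)
  set M : Fin n → ((Fin n → ℝ) →L[ℝ] ℝ) := fun j =>
    ∑ l, (K j l * b l) • ((-(S l ^ 2)⁻¹) • L l) with hMdef
  have hGder : ∀ j, HasFDerivAt
      (fun y : Fin n → ℝ => ∑ l, K j l * (b l / ∑ i', K i' l * Real.exp (y i'))) (M j) x := by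
    intro j
    apply HasFDerivAt.fun_sum
    intro l _
    have h0 : HasFDerivAt (fun y : Fin n → ℝ => (∑ i', K i' l * Real.exp (y i'))⁻¹)
        ((-(S l ^ 2)⁻¹) • L l) x :=
      (hasDerivAt_inv (ne_of_gt (hS_pos l))).comp_hasFDerivAt x (hSder l)
    have h1 := h0.const_mul (K j l * b l)
    have heq : (fun y : Fin n → ℝ => K j l * (b l / ∑ i', K i' l * Real.exp (y i'))) =
        fun y : Fin n → ℝ => (K j l * b l) * (∑ i', K i' l * Real.exp (y i'))⁻¹ := by
      funext y; rw [div_eq_mul_inv, mul_assoc]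
    rw [heq]
    exact h1
  -- derivative of F
  set D : Fin n → ((Fin n → ℝ) →L[ℝ] ℝ) := fun j => -((G j)⁻¹ • M j) with hDdef
  have hFder : HasFDerivAt F (ContinuousLinearMap.pi D) x := by
    have hFeq : F = fun (y : Fin n → ℝ) (j : Fin n) => Real.log (a j) -
        Real.log (∑ l, K j l * (b l / ∑ i', K i' l * Real.exp (y i'))) := by
      funext y j; exact hF y j
    rw [hFeq]
    apply hasFDerivAt_pi.2
    intro j
    exact ((hGder j).log (ne_of_gt (hG_pos j))).const_sub (Real.log (a j))
  -- explicit formula for J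
  have hL_apply : ∀ l i, L l (Pi.single i 1) = K i l * Real.exp (x i) := by
    intro l i
    rw [hLdef]
    simp [ContinuousLinearMap.sum_apply, Pi.single_apply, mul_ite]
  have hJ_formula : ∀ j i, J x j i =
      (G j)⁻¹ * ∑ l, K j l * b l * ((S l ^ 2)⁻¹ * (K i l * Real.exp (x i))) := by
    intro j i
    rw [hJ, hFder.fderiv]
    simp only [ContinuousLinearMap.pi_apply, hDdef, ContinuousLinearMap.neg_apply,
      ContinuousLinearMap.smul_apply, ContinuousLinearMap.sum_apply, hMdef, hL_apply,
      smul_eq_mul]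
    rw [Finset.mul_sum, Finset.mul_sum, ← Finset.sum_neg_distrib]
    apply Finset.sum_congr rfl
    intro l _
    ring
  -- explicit formula for w
  have hw_formula : ∀ j, w x j = Real.exp (x j) * G j := by
    intro j
    rw [hw, hF]
    have hexp : Real.exp (Real.log (a j) -
        Real.log (∑ l, K j l * (b l / ∑ i', K i' l * Real.exp (x i')))) = a j / G j := by
      rw [Real.exp_sub, Real.exp_log (ha_pos j), Real.exp_log (hG_pos j)]
    rw [hexp]
    have ha' := ne_of_gt (ha_pos j)
    have hg' := ne_of_gt (hG_pos j)
    field_simp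
  -- final computation
  funext i
  simp only [Matrix.mulVec, dotProduct, Matrix.transpose_apply]
  have key : ∀ j : Fin n, J x j i * w x j =
      ∑ l, K j l * b l * ((S l ^ 2)⁻¹ * (K i l * Real.exp (x i))) * Real.exp (x j) := by
    intro j
    rw [hJ_formula, hw_formula]
    rw [show (G j)⁻¹ * (∑ l, K j l * b l * ((S l ^ 2)⁻¹ * (K i l * Real.exp (x i)))) *
        (Real.exp (x j) * G j) = ((G j)⁻¹ * G j) *
        ((∑ l, K j l * b l * ((S l ^ 2)⁻¹ * (K i l * Real.exp (x i)))) * Real.exp (x j)) by ring]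
    rw [inv_mul_cancel₀ (ne_of_gt (hG_pos j)), one_mul, Finset.sum_mul]
  rw [Finset.sum_congr rfl (fun j _ => key j), Finset.sum_comm]
  have step : ∀ l : Fin m,
      (∑ j, K j l * b l * ((S l ^ 2)⁻¹ * (K i l * Real.exp (x i))) * Real.exp (x j)) =
      K i l * (b l / S l) * Real.exp (x i) := by
    intro l
    have : (∑ j, K j l * b l * ((S l ^ 2)⁻¹ * (K i l * Real.exp (x i))) * Real.exp (x j)) =
        (b l * ((S l ^ 2)⁻¹ * (K i l * Real.exp (x i)))) * ∑ j, K j l * Real.exp (x j) := by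
      rw [Finset.mul_sum]; apply Finset.sum_congr rfl; intro j _; ring
    rw [this]
    have hSl : (∑ j, K j l * Real.exp (x j)) = S l := rfl
    rw [hSl]
    have hne := ne_of_gt (hS_pos l)
    field_simp
  rw [Finset.sum_congr rfl (fun l _ => step l), hw_formula]
  rw [hGdef, Finset.mul_sum]
  apply Finset.sum_congr rfl
  intro l _
  ring
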